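/- Let d ≥ 2 and n = d + 2, and fix (α, λ) ∈ ℂ^{d−1} × ℂ and j ∈ {0,…,n−1}. If y₁ and y₂ are two nonzero solutions of the Schrödinger equation with parameters (α, λ), both subdominant in the Stokes sector S_j, then they are linearly dependent: there exists a nonzero constant c ∈ ℂ with y₂ = c·y₁. -/

import Mathlib

open Complex Filter Topology

/-- The polynomial potential `P_α(z) = z^d + α_{d-1} z^{d-1} + ⋯ + α₁ z`. -/
noncomputable def Pol (d : ℕ) (α : Fin (d - 1) → ℂ) (z : ℂ) : ℂ :=
  z ^ d + ∑ i : Fin (d - 1), α i * z ^ ((i : ℕ) + 1)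

/-- `y` is an (entire) solution of the Schrödinger equation `y'' = (P_α - λ) y`. -/
def IsSol (d : ℕ) (α : Fin (d - 1) → ℂ) (lam : ℂ) (y : ℂ → ℂ) : Prop :=
  Differentiable ℂ y ∧ ∀ z : ℂ, deriv (deriv y) z = (Pol d α z - lam) * y z

/-- `θ` is a ray direction of the Stokes sector `S_j`. -/
def DirIn (n j : ℕ) (θ : ℝ) : Prop :=
  |θ - 2 * Real.pi * j / n| < Real.pi / n

/-- `y` is subdominant in the Stokes sector `S_j`: it tends to `0` along every ray in `S_j`. -/
def Subdominant (n j : ℕ) (y : ℂ → ℂ) : Prop :=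
  ∀ θ : ℝ, DirIn n j θ →
    Tendsto (fun r : ℝ => y ((r : ℂ) * Complex.exp (θ * Complex.I))) atTop (𝓝 0)

/-! ### Auxiliary lemmas -/

private lemma deriv_entire {y : ℂ → ℂ} (h : Differentiable ℂ y) : Differentiable ℂ (deriv y) :=
  (contDiff_infty_iff_deriv.1 h.contDiff).2.differentiable (by simp)

/-- Derivative of an entire function along a line `t ↦ z₀ + t•e`. -/
private lemma hasDerivAt_line (y : ℂ → ℂ) (hy : Differentiable ℂ y) (z₀ e : ℂ) (t : ℝ) :
    HasDerivAt (fun r : ℝ => y (z₀ + (r : ℂ) * e)) (e * deriv y (z₀ + (t : ℂ) * e)) t := by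
  have hin : HasDerivAt (fun z : ℂ => z₀ + z * e) e (t : ℂ) := by
    simpa using ((hasDerivAt_id (t : ℂ)).mul_const e).const_add z₀
  have hout : HasDerivAt y (deriv y (z₀ + (t : ℂ) * e)) (z₀ + (t : ℂ) * e) :=
    (hy _).hasDerivAt
  have := hout.comp (t : ℂ) hin
  have h2 : HasDerivAt (fun z : ℂ => y (z₀ + z * e)) (e * deriv y (z₀ + (t : ℂ) * e)) (t : ℂ) := by
    simpa [Function.comp_def, mul_comm] using this
  exact h2.comp_ofReal

/-- The Wronskian of two solutions is constant. -/
private lemma wronskian_const {d : ℕ} {α : Fin (d - 1) → ℂ} {lam : ℂ} {y₁ y₂ : ℂ → ℂ}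
    (h1 : IsSol d α lam y₁) (h2 : IsSol d α lam y₂) (z z' : ℂ) :
    y₁ z * deriv y₂ z - y₂ z * deriv y₁ z = y₁ z' * deriv y₂ z' - y₂ z' * deriv y₁ z' := by
  have hd1 := h1.1
  have hd2 := h2.1
  have hd1' : Differentiable ℂ (deriv y₁) := deriv_entire hd1
  have hd2' : Differentiable ℂ (deriv y₂) := deriv_entire hd2
  have key : ∀ x : ℂ,
      HasDerivAt (fun z => y₁ z * deriv y₂ z - y₂ z * deriv y₁ z) 0 x := by
    intro x
    have H := ((hd1 x).hasDerivAt.mul (hd2' x).hasDerivAt).sub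
        ((hd2 x).hasDerivAt.mul (hd1' x).hasDerivAt)
    refine H.congr_deriv ?_
    rw [h1.2 x, h2.2 x]; ring
  have hWdiff : Differentiable ℂ (fun z => y₁ z * deriv y₂ z - y₂ z * deriv y₁ z) :=
    fun x => (key x).differentiableAt
  refine is_const_of_fderiv_eq_zero hWdiff (fun x => ?_) z z'
  refine ContinuousLinearMap.ext_ring ?_
  rw [fderiv_apply_one_eq_deriv, (key x).deriv]
  simp

/-- A function whose derivative is at least `a` on `[r₁, ∞)` grows at least linearly. -/
private lemma lower_linear {f : ℝ → ℝ} {r₁ a : ℝ}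
    (hf : ∀ s, r₁ ≤ s → ∃ D, HasDerivAt f D s ∧ a ≤ D) :
    ∀ s, r₁ ≤ s → f r₁ + a * (s - r₁) ≤ f s := by
  intro s hs
  have hlin : ∀ t : ℝ, HasDerivAt (fun t : ℝ => a * t) a t := fun t => by
    simpa using (hasDerivAt_id t).const_mul a
  have hmono : MonotoneOn (fun t => f t - a * t) (Set.Ici r₁) := by
    apply monotoneOn_of_deriv_nonneg (convex_Ici r₁)
    · intro t ht
      exact (((hf t ht).choose_spec.1).sub (hlin t)).continuousAt.continuousWithinAt
    · intro t ht
      rw [interior_Ici] at ht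
      exact (((hf t ht.le).choose_spec.1).sub (hlin t)).differentiableAt.differentiableWithinAt
    · intro t ht
      rw [interior_Ici] at ht
      obtain ⟨D, hD, haD⟩ := hf t ht.le
      rw [show deriv (fun t => f t - a * t) t = D - a from (hD.sub (hlin t)).deriv]
      linarith
  have h := hmono (Set.mem_Ici.2 (le_refl r₁)) (Set.mem_Ici.2 hs) hs
  simp only at h
  linarith

/-- If `φ' = 2G`, `G' ≥ 0` on `[R,∞)` and `φ → 0` at `∞`, then `G ≤ 0` on `[R,∞)`. -/
private lemma G_nonpos {G φ : ℝ → ℝ} {R : ℝ}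
    (hφ : ∀ r, HasDerivAt φ (2 * G r) r)
    (hG' : ∀ r, R ≤ r → ∃ D, HasDerivAt G D r ∧ 0 ≤ D)
    (hφ0 : Tendsto φ atTop (𝓝 0)) :
    ∀ r, R ≤ r → G r ≤ 0 := by
  intro r₁ hr₁
  by_contra hpos
  push_neg at hpos
  have hGmono : ∀ s, r₁ ≤ s → G r₁ ≤ G s := by
    intro s hs
    have := lower_linear (f := G) (a := 0) (r₁ := r₁)
      (fun t ht => by
        obtain ⟨D, hD, hD0⟩ := hG' t (hr₁.trans ht)
        exact ⟨D, hD, hD0⟩) s hs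
    linarith
  have hφgrow : ∀ s, r₁ ≤ s → φ r₁ + (2 * G r₁) * (s - r₁) ≤ φ s :=
    lower_linear (f := φ) (a := 2 * G r₁)
      (fun t ht => ⟨2 * G t, hφ t, by linarith [hGmono t ht]⟩)
  have hlin : Tendsto (fun s : ℝ => φ r₁ + 2 * G r₁ * (s - r₁)) atTop atTop := by
    apply tendsto_atTop_add_const_left
    apply Tendsto.const_mul_atTop (by linarith : (0:ℝ) < 2 * G r₁)
    simpa [sub_eq_add_neg] using tendsto_atTop_add_const_right atTop (-r₁) tendsto_id
  have h1 : ∀ᶠ s in atTop, (1:ℝ) ≤ φ r₁ + 2 * G r₁ * (s - r₁) := hlin.eventually_ge_atTop 1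
  have h2 : ∀ᶠ s in atTop, φ s < 1 := hφ0.eventually_lt_const (by norm_num)
  have h3 : ∀ᶠ s in atTop, r₁ ≤ s := eventually_ge_atTop r₁
  obtain ⟨s, ⟨hs1, hs2⟩, hs3⟩ := ((h1.and h2).and h3).exists
  have := hφgrow s hs3
  linarith

/-- If `H' ≥ F` on `[R,∞)` and `H ≤ 0` there, then `F` dips below 1 beyond any point. -/
private lemma exists_small {H F : ℝ → ℝ} {R : ℝ}
    (hH : ∀ r, R ≤ r → ∃ D, HasDerivAt H D r ∧ F r ≤ D)
    (hHle : ∀ r, R ≤ r → H r ≤ 0) :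
    ∀ R₃, R ≤ R₃ → ∃ r, R₃ ≤ r ∧ F r ≤ 1 := by
  intro R₃ hR₃
  by_contra hcon
  push_neg at hcon
  have hgrow : ∀ s, R₃ ≤ s → H R₃ + 1 * (s - R₃) ≤ H s := by
    refine lower_linear (fun t ht => ?_)
    obtain ⟨D, hD, hFD⟩ := hH t (hR₃.trans ht)
    exact ⟨D, hD, le_trans (hcon t ht).le hFD⟩
  have h1 := hgrow (R₃ + 1 - H R₃) (by nlinarith [hHle R₃ hR₃])
  have h2 := hHle (R₃ + 1 - H R₃) (by nlinarith [hHle R₃ hR₃])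
  linarith

private lemma star_mul_re (a b c : ℂ) :
    (star b * b + star a * (c * a)).re = Complex.normSq b + c.re * Complex.normSq a := by
  simp [Complex.mul_re, Complex.mul_im, Complex.normSq_apply]; ring

private lemma star_mul_re' (a b : ℂ) :
    (star b * a + star a * b).re = 2 * (star a * b).re := by
  simp [Complex.mul_re, Complex.mul_im]; ring

private lemma normSq_eq_star (a : ℂ) : Complex.normSq a = (star a * a).re := by
  simp [Complex.mul_re, Complex.normSq_apply]

/-- The key analytic step: the (constant) Wronskian of two subdominant solutions vanishes. -/
private lemma wronskian_vanish (d : ℕ) (hd : 2 ≤ d) (n : ℕ) (hn : n = d + 2)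
    (α : Fin (d - 1) → ℂ) (lam : ℂ) (j : ℕ)
    (y₁ y₂ : ℂ → ℂ) (hy₁ : IsSol d α lam y₁) (hy₂ : IsSol d α lam y₂)
    (hs₁ : Subdominant n j y₁) (hs₂ : Subdominant n j y₂) (z : ℂ) :
    y₁ z * deriv y₂ z - y₂ z * deriv y₁ z = 0 := by
  subst hn
  -- the central direction of the sector
  set θ : ℝ := 2 * Real.pi * j / (d + 2 : ℕ) with hθdef
  have hθ : DirIn (d + 2) j θ := by
    simp only [DirIn, hθdef, sub_self, abs_zero]
    have : (0:ℝ) < ((d + 2 : ℕ) : ℝ) := by positivity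
    exact div_pos Real.pi_pos this
  have hu0 := hs₁ θ hθ
  have hv0 := hs₂ θ hθ
  set w : ℂ := Complex.exp ((θ : ℂ) * Complex.I) with hwdef
  have hwn : w ^ (d + 2) = 1 := by
    rw [hwdef, ← Complex.exp_nat_mul]
    have hnθ : (((d + 2 : ℕ) : ℝ)) * θ = 2 * Real.pi * j := by
      rw [hθdef]
      have : ((d + 2 : ℕ) : ℝ) ≠ 0 := by positivity
      field_simp
    have : ((d + 2 : ℕ) : ℂ) * ((θ : ℂ) * Complex.I) = ((j : ℤ) : ℂ) * (2 * (Real.pi : ℂ) * Complex.I) := by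
      have h1 : ((d + 2 : ℕ) : ℂ) * (θ : ℂ) = ((2 * Real.pi * j : ℝ) : ℂ) := by
        rw [← hnθ]; push_cast; ring
      calc ((d + 2 : ℕ) : ℂ) * ((θ : ℂ) * Complex.I)
          = (((d + 2 : ℕ) : ℂ) * (θ : ℂ)) * Complex.I := by ring
        _ = ((2 * Real.pi * j : ℝ) : ℂ) * Complex.I := by rw [h1]
        _ = ((j : ℤ) : ℂ) * (2 * (Real.pi : ℂ) * Complex.I) := by push_cast; ring
    rw [this, Complex.exp_int_mul_two_pi_mul_I]
  have hwabs : ‖w‖ = 1 := by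
    rw [hwdef, Complex.norm_exp_ofReal_mul_I]
  have hw0 : w ≠ 0 := by
    intro h; rw [h] at hwabs; simp at hwabs
  -- ray restrictions
  set u : ℝ → ℂ := fun r : ℝ => y₁ ((r : ℂ) * w) with hu_def
  set v : ℝ → ℂ := fun r : ℝ => y₂ ((r : ℂ) * w) with hv_def
  set du : ℝ → ℂ := fun r : ℝ => w * deriv y₁ ((r : ℂ) * w) with hdu_def
  set dv : ℝ → ℂ := fun r : ℝ => w * deriv y₂ ((r : ℂ) * w) with hdv_def
  set q : ℝ → ℂ := fun r : ℝ => w ^ 2 * (Pol d α ((r : ℂ) * w) - lam) with hq_def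
  have hu : ∀ r : ℝ, HasDerivAt u (du r) r := by
    intro r
    have := hasDerivAt_line y₁ hy₁.1 0 w r
    simpa [hu_def, hdu_def] using this
  have hv : ∀ r : ℝ, HasDerivAt v (dv r) r := by
    intro r
    have := hasDerivAt_line y₂ hy₂.1 0 w r
    simpa [hv_def, hdv_def] using this
  have hdu : ∀ r : ℝ, HasDerivAt du (q r * u r) r := by
    intro r
    have h0 := (hasDerivAt_line (deriv y₁) (deriv_entire hy₁.1) 0 w r).const_mul w
    have h1 : HasDerivAt du (w * (w * deriv (deriv y₁) ((r : ℂ) * w))) r := by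
      simpa [hdu_def] using h0
    convert h1 using 1
    rw [hy₁.2]
    simp only [hq_def, hu_def]
    ring
  have hdv : ∀ r : ℝ, HasDerivAt dv (q r * v r) r := by
    intro r
    have h0 := (hasDerivAt_line (deriv y₂) (deriv_entire hy₂.1) 0 w r).const_mul w
    have h1 : HasDerivAt dv (w * (w * deriv (deriv y₂) ((r : ℂ) * w))) r := by
      simpa [hdv_def] using h0
    convert h1 using 1
    rw [hy₂.2]
    simp only [hq_def, hv_def]
    ring
  -- energy functions
  set G₁ : ℝ → ℝ := fun r => (star (u r) * du r).re with hG₁_def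
  set G₂ : ℝ → ℝ := fun r => (star (v r) * dv r).re with hG₂_def
  set φ₁ : ℝ → ℝ := fun r => Complex.normSq (u r) with hφ₁_def
  set φ₂ : ℝ → ℝ := fun r => Complex.normSq (v r) with hφ₂_def
  have hG₁ : ∀ r, HasDerivAt G₁
      (Complex.normSq (du r) + (q r).re * Complex.normSq (u r)) r := by
    intro r
    have h1 := (hu r).star.mul (hdu r)
    have h2 := Complex.reCLM.hasFDerivAt.comp_hasDerivAt r h1
    have h3 : HasDerivAt (fun s => (star (u s) * du s).re)
        ((star (du r) * du r + star (u r) * (q r * u r)).re) r := by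
      simpa only [Function.comp_def, Complex.reCLM_apply, Pi.mul_apply] using h2
    rw [hG₁_def]
    convert h3 using 1
    rw [star_mul_re]
  have hG₂ : ∀ r, HasDerivAt G₂
      (Complex.normSq (dv r) + (q r).re * Complex.normSq (v r)) r := by
    intro r
    have h1 := (hv r).star.mul (hdv r)
    have h2 := Complex.reCLM.hasFDerivAt.comp_hasDerivAt r h1
    have h3 : HasDerivAt (fun s => (star (v s) * dv s).re)
        ((star (dv r) * dv r + star (v r) * (q r * v r)).re) r := by
      simpa only [Function.comp_def, Complex.reCLM_apply, Pi.mul_apply] using h2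
    rw [hG₂_def]
    convert h3 using 1
    rw [star_mul_re]
  have hφ₁ : ∀ r, HasDerivAt φ₁ (2 * G₁ r) r := by
    intro r
    have h1 := (hu r).star.mul (hu r)
    have h2 := Complex.reCLM.hasFDerivAt.comp_hasDerivAt r h1
    have h3 : HasDerivAt (fun r => (star (u r) * u r).re)
        ((star (du r) * u r + star (u r) * du r).re) r := by
      simpa only [Function.comp_def, Complex.reCLM_apply, Pi.mul_apply] using h2
    have h4 : φ₁ = fun r => (star (u r) * u r).re := by
      funext s; rw [hφ₁_def]; exact normSq_eq_star (u s)
    rw [h4]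
    convert h3 using 1
    rw [star_mul_re', hG₁_def]
  have hφ₂ : ∀ r, HasDerivAt φ₂ (2 * G₂ r) r := by
    intro r
    have h1 := (hv r).star.mul (hv r)
    have h2 := Complex.reCLM.hasFDerivAt.comp_hasDerivAt r h1
    have h3 : HasDerivAt (fun r => (star (v r) * v r).re)
        ((star (dv r) * v r + star (v r) * dv r).re) r := by
      simpa only [Function.comp_def, Complex.reCLM_apply, Pi.mul_apply] using h2
    have h4 : φ₂ = fun r => (star (v r) * v r).re := by
      funext s; rw [hφ₂_def]; exact normSq_eq_star (v s)
    rw [h4]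
    convert h3 using 1
    rw [star_mul_re', hG₂_def]
  -- positivity of Re q for large r
  set S : ℝ := ∑ i : Fin (d - 1), ‖α i‖ with hS_def
  set L : ℝ := ‖lam‖ with hL_def
  have hS0 : 0 ≤ S := Finset.sum_nonneg fun i _ => norm_nonneg _
  have hL0 : 0 ≤ L := norm_nonneg _
  set R : ℝ := 1 + S + L with hR_def
  have hq_eq : ∀ r : ℝ, q r = ((r ^ d : ℝ) : ℂ) +
      ((∑ i : Fin (d - 1), α i * ((r : ℂ) ^ ((i : ℕ) + 1) * w ^ ((i : ℕ) + 3))) - w ^ 2 * lam) := by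
    intro r
    have h1 : w ^ 2 * ((r : ℂ) * w) ^ d = ((r ^ d : ℝ) : ℂ) := by
      rw [mul_pow, Complex.ofReal_pow]
      calc w ^ 2 * ((r : ℂ) ^ d * w ^ d) = (r : ℂ) ^ d * (w ^ 2 * w ^ d) := by ring
        _ = (r : ℂ) ^ d * w ^ (2 + d) := by rw [pow_add]
        _ = (r : ℂ) ^ d := by rw [show 2 + d = d + 2 by omega, hwn, mul_one]
    have h2 : ∀ i : Fin (d - 1), w ^ 2 * (α i * ((r : ℂ) * w) ^ ((i : ℕ) + 1)) =
        α i * ((r : ℂ) ^ ((i : ℕ) + 1) * w ^ ((i : ℕ) + 3)) := by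
      intro i
      rw [mul_pow, show (i : ℕ) + 3 = ((i : ℕ) + 1) + 2 by omega, pow_add]
      ring
    simp only [hq_def, Pol, mul_sub, mul_add, Finset.mul_sum]
    rw [h1, Finset.sum_congr rfl (fun i _ => h2 i)]
    ring
  have hqre : ∀ r : ℝ, R ≤ r → 0 ≤ (q r).re := by
    intro r hr
    have hr1 : (1:ℝ) ≤ r := by rw [hR_def] at hr; linarith
    have hr0 : (0:ℝ) ≤ r := by linarith
    set rest : ℂ := (∑ i : Fin (d - 1), α i * ((r : ℂ) ^ ((i : ℕ) + 1) * w ^ ((i : ℕ) + 3))) -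
        w ^ 2 * lam with hrest_def
    have hre : (q r).re = r ^ d + rest.re := by
      rw [hq_eq r, ← hrest_def, Complex.add_re, Complex.ofReal_re]
    have hrest_bound : ‖rest‖ ≤ S * r ^ (d - 1) + L := by
      rw [hrest_def]
      refine le_trans (norm_sub_le _ _) ?_
      have hsum : ‖∑ i : Fin (d - 1), α i * ((r : ℂ) ^ ((i : ℕ) + 1) * w ^ ((i : ℕ) + 3))‖ ≤
          S * r ^ (d - 1) := by
        refine le_trans (norm_sum_le _ _) ?_
        rw [hS_def, Finset.sum_mul]
        refine Finset.sum_le_sum fun i _ => ?_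
        have h1 : ‖α i * ((r : ℂ) ^ ((i : ℕ) + 1) * w ^ ((i : ℕ) + 3))‖ =
            ‖α i‖ * r ^ ((i : ℕ) + 1) := by
          rw [norm_mul, norm_mul, norm_pow, norm_pow, hwabs, one_pow, mul_one,
            Complex.norm_real, Real.norm_eq_abs, _root_.abs_of_nonneg hr0]
        rw [h1]
        refine mul_le_mul_of_nonneg_left ?_ (norm_nonneg _)
        refine pow_le_pow_right₀ hr1 ?_
        have := i.isLt
        omega
      have hwl : ‖w ^ 2 * lam‖ = L := by
        rw [norm_mul, norm_pow, hwabs, one_pow, one_mul, hL_def]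
      rw [hwl]
      linarith
    have hrest_re : -(S * r ^ (d - 1) + L) ≤ rest.re := by
      have h1 : |rest.re| ≤ ‖rest‖ := by
        exact Complex.abs_re_le_norm rest
      have h2 := (abs_le.mp h1).1
      linarith
    -- now show r^d ≥ S r^(d-1) + L
    have e1 : r ^ d = r ^ (d - 1) * r := by
      rw [← pow_succ]
      congr 1
      omega
    have e2 : (1:ℝ) ≤ r ^ (d - 1) := one_le_pow₀ hr1
    have e3 : (0:ℝ) ≤ r ^ (d - 1) * (r - (1 + S + L)) := by
      apply mul_nonneg (by positivity)
      rw [hR_def] at hr; linarith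
    have e4 : (0:ℝ) ≤ (r ^ (d - 1) - 1) * (1 + L) := by
      apply mul_nonneg (by linarith) (by linarith)
    rw [hre]
    nlinarith [e1, e2, e3, e4]
  -- G₁, G₂ are nonpositive beyond R
  have hφ₁0 : Tendsto φ₁ atTop (𝓝 0) := by
    have : Tendsto (fun r => Complex.normSq (u r)) atTop (𝓝 (Complex.normSq 0)) :=
      (Complex.continuous_normSq.tendsto 0).comp hu0
    simpa [hφ₁_def] using this
  have hφ₂0 : Tendsto φ₂ atTop (𝓝 0) := by
    have : Tendsto (fun r => Complex.normSq (v r)) atTop (𝓝 (Complex.normSq 0)) :=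
      (Complex.continuous_normSq.tendsto 0).comp hv0
    simpa [hφ₂_def] using this
  have hG₁le : ∀ r, R ≤ r → G₁ r ≤ 0 :=
    G_nonpos hφ₁ (fun r hr => ⟨_, hG₁ r,
      add_nonneg (Complex.normSq_nonneg _) (mul_nonneg (hqre r hr) (Complex.normSq_nonneg _))⟩) hφ₁0
  have hG₂le : ∀ r, R ≤ r → G₂ r ≤ 0 :=
    G_nonpos hφ₂ (fun r hr => ⟨_, hG₂ r,
      add_nonneg (Complex.normSq_nonneg _) (mul_nonneg (hqre r hr) (Complex.normSq_nonneg _))⟩) hφ₂0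
  -- the Wronskian along the ray
  have hWray : ∀ r : ℝ, u r * dv r - v r * du r =
      w * (y₁ z * deriv y₂ z - y₂ z * deriv y₁ z) := by
    intro r
    have := wronskian_const hy₁ hy₂ ((r : ℂ) * w) z
    simp only [hu_def, hv_def, hdu_def, hdv_def]
    calc y₁ ((r:ℂ)*w) * (w * deriv y₂ ((r:ℂ)*w)) - y₂ ((r:ℂ)*w) * (w * deriv y₁ ((r:ℂ)*w))
        = w * (y₁ ((r:ℂ)*w) * deriv y₂ ((r:ℂ)*w) - y₂ ((r:ℂ)*w) * deriv y₁ ((r:ℂ)*w)) := by ring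
      _ = w * (y₁ z * deriv y₂ z - y₂ z * deriv y₁ z) := by rw [this]
  -- conclude: the Wronskian is arbitrarily small
  have hsmall : ∀ δ : ℝ, 0 < δ → ‖y₁ z * deriv y₂ z - y₂ z * deriv y₁ z‖ ≤ δ := by
    intro δ hδ
    have hev1 : ∀ᶠ r in atTop, ‖u r‖ < δ / 2 := by
      have := hu0.norm
      rw [norm_zero] at this
      exact this.eventually_lt_const (by linarith)
    have hev2 : ∀ᶠ r in atTop, ‖v r‖ < δ / 2 := by
      have := hv0.norm
      rw [norm_zero] at this
      exact this.eventually_lt_const (by linarith)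
    obtain ⟨R₄, hR₄⟩ := eventually_atTop.1 (hev1.and hev2)
    set R₃ : ℝ := max R R₄ with hR₃_def
    -- find a point beyond R₃ where the derivatives are small
    have hex := exists_small (H := fun r => G₁ r + G₂ r)
      (F := fun r => Complex.normSq (du r) + Complex.normSq (dv r)) (R := R)
      (fun r hr => ⟨_, (hG₁ r).add (hG₂ r), by
        have h1 := mul_nonneg (hqre r hr) (Complex.normSq_nonneg (u r))
        have h2 := mul_nonneg (hqre r hr) (Complex.normSq_nonneg (v r))
        show Complex.normSq (du r) + Complex.normSq (dv r) ≤ _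
        linarith⟩)
      (fun r hr => by
        have h1 := hG₁le r hr
        have h2 := hG₂le r hr
        show G₁ r + G₂ r ≤ 0
        linarith)
      R₃ (le_max_left _ _)
    obtain ⟨r, hrR₃, hrF⟩ := hex
    have hrF' : Complex.normSq (du r) + Complex.normSq (dv r) ≤ 1 := hrF
    have hdur : ‖du r‖ ≤ 1 := by
      have h1 : ‖du r‖ ^ 2 ≤ 1 := by
        have h2 : Complex.normSq (du r) ≤ 1 := by
          have := Complex.normSq_nonneg (dv r); linarith
        calc ‖du r‖ ^ 2 = Complex.normSq (du r) := by
              rw [Complex.sq_norm]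
          _ ≤ 1 := h2
      nlinarith [norm_nonneg (du r)]
    have hdvr : ‖dv r‖ ≤ 1 := by
      have h1 : ‖dv r‖ ^ 2 ≤ 1 := by
        have h2 : Complex.normSq (dv r) ≤ 1 := by
          have := Complex.normSq_nonneg (du r); linarith
        calc ‖dv r‖ ^ 2 = Complex.normSq (dv r) := by
              rw [Complex.sq_norm]
          _ ≤ 1 := h2
      nlinarith [norm_nonneg (dv r)]
    have hur : ‖u r‖ < δ / 2 := (hR₄ r (le_trans (le_max_right _ _) hrR₃)).1
    have hvr : ‖v r‖ < δ / 2 := (hR₄ r (le_trans (le_max_right _ _) hrR₃)).2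
    have hkey : ‖u r * dv r - v r * du r‖ ≤ δ := by
      refine le_trans (norm_sub_le _ _) ?_
      have n1 : ‖u r * dv r‖ = ‖u r‖ * ‖dv r‖ := norm_mul _ _
      have n2 : ‖v r * du r‖ = ‖v r‖ * ‖du r‖ := norm_mul _ _
      rw [n1, n2]
      have b1 : ‖u r‖ * ‖dv r‖ ≤ δ / 2 := by
        calc ‖u r‖ * ‖dv r‖ ≤ ‖u r‖ * 1 := by
              exact mul_le_mul_of_nonneg_left hdvr (norm_nonneg _)
          _ = ‖u r‖ := mul_one _
          _ ≤ δ / 2 := hur.le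
      have b2 : ‖v r‖ * ‖du r‖ ≤ δ / 2 := by
        calc ‖v r‖ * ‖du r‖ ≤ ‖v r‖ * 1 := by
              exact mul_le_mul_of_nonneg_left hdur (norm_nonneg _)
          _ = ‖v r‖ := mul_one _
          _ ≤ δ / 2 := hvr.le
      linarith
    have := hWray r
    rw [this] at hkey
    rw [norm_mul, hwabs, one_mul] at hkey
    exact hkey
  by_contra hne
  have hpos : 0 < ‖y₁ z * deriv y₂ z - y₂ z * deriv y₁ z‖ := by
    simpa [norm_pos_iff] using hne
  have := hsmall (‖y₁ z * deriv y₂ z - y₂ z * deriv y₁ z‖ / 2) (by linarith)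
  linarith

/-- Vanishing Wronskian implies proportionality (constant so far unconstrained). -/
private lemma colinear_of_wronskian_zero {d : ℕ} {α : Fin (d - 1) → ℂ} {lam : ℂ}
    {y₁ y₂ : ℂ → ℂ} (h1 : IsSol d α lam y₁) (h2 : IsSol d α lam y₂)
    (hW0 : ∀ z, y₁ z * deriv y₂ z - y₂ z * deriv y₁ z = 0) (h₁0 : y₁ ≠ 0) :
    ∃ c : ℂ, y₂ = fun z => c * y₁ z := by
  obtain ⟨z₀, hz₀⟩ := Function.ne_iff.1 h₁0
  have hz₀' : y₁ z₀ ≠ 0 := by simpa using hz₀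
  refine ⟨y₂ z₀ / y₁ z₀, funext fun z => ?_⟩
  set c : ℂ := y₂ z₀ / y₁ z₀ with hc_def
  set g : ℂ → ℂ := fun z => y₂ z - c * y₁ z with hg_def
  suffices h : g z = 0 by
    have h' : y₂ z - c * y₁ z = 0 := h
    have := sub_eq_zero.mp h'
    simpa using this
  have hgdiff : Differentiable ℂ g := h2.1.sub (h1.1.const_mul c)
  have hdg : ∀ x, deriv g x = deriv y₂ x - c * deriv y₁ x := by
    intro x
    rw [hg_def]
    rw [deriv_fun_sub (h2.1 x) ((h1.1.const_mul c) x), deriv_const_mul c (h1.1 x)]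
  have hdg_fun : deriv g = fun x => deriv y₂ x - c * deriv y₁ x := funext hdg
  have hdgdiff : Differentiable ℂ (deriv g) := by
    rw [hdg_fun]
    exact (deriv_entire h2.1).sub ((deriv_entire h1.1).const_mul c)
  have hddg : ∀ x, deriv (deriv g) x = (Pol d α x - lam) * g x := by
    intro x
    rw [hdg_fun, deriv_fun_sub ((deriv_entire h2.1) x) (((deriv_entire h1.1).const_mul c) x),
      deriv_const_mul c ((deriv_entire h1.1) x), h1.2, h2.2, hg_def]
    ring
  have hg0 : g z₀ = 0 := by
    rw [hg_def, hc_def]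
    field_simp
    ring
  have hdg0 : deriv g z₀ = 0 := by
    have hW := hW0 z₀
    rw [hdg z₀, hc_def, div_mul_eq_mul_div, sub_eq_zero, eq_div_iff hz₀']
    linear_combination hW
  -- Gronwall along the segment from z₀ to z
  set e : ℂ := z - z₀ with he_def
  have hγcont : Continuous (fun t : ℝ => z₀ + (t : ℂ) * e) :=
    continuous_const.add (Complex.continuous_ofReal.mul continuous_const)
  have hPolcont : Continuous (Pol d α) := by
    unfold Pol
    exact (continuous_pow d).add
      (continuous_finset_sum _ fun i _ => continuous_const.mul (continuous_pow _))
  have hcont : ContinuousOn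
      (fun t : ℝ => ‖e ^ 2 * (Pol d α (z₀ + (t : ℂ) * e) - lam)‖) (Set.Icc (0:ℝ) 1) :=
    (continuous_const.mul ((hPolcont.comp hγcont).sub continuous_const)).norm.continuousOn
  obtain ⟨C, hC⟩ := isCompact_Icc.exists_bound_of_continuousOn hcont
  have hC' : ∀ t ∈ Set.Icc (0:ℝ) 1, ‖e ^ 2 * (Pol d α (z₀ + (t : ℂ) * e) - lam)‖ ≤ C := by
    intro t ht
    have := hC t ht
    rwa [norm_norm] at this
  have hC0 : 0 ≤ C :=
    le_trans (norm_nonneg _) (hC' 0 ⟨le_refl 0, zero_le_one⟩)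
  set K : ℝ := max C 1 with hK_def
  have hK1 : (1:ℝ) ≤ K := le_max_right _ _
  have hKC : C ≤ K := le_max_left _ _
  set F : ℝ → ℂ × ℂ := fun t => (g (z₀ + (t : ℂ) * e), e * deriv g (z₀ + (t : ℂ) * e))
    with hF_def
  have hF : ∀ t : ℝ, HasDerivAt F
      (e * deriv g (z₀ + (t : ℂ) * e),
        e ^ 2 * (Pol d α (z₀ + (t : ℂ) * e) - lam) * g (z₀ + (t : ℂ) * e)) t := by
    intro t
    have h1' : HasDerivAt (fun t : ℝ => g (z₀ + (t : ℂ) * e))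
        (e * deriv g (z₀ + (t : ℂ) * e)) t := hasDerivAt_line g hgdiff z₀ e t
    have h2' : HasDerivAt (fun t : ℝ => deriv g (z₀ + (t : ℂ) * e))
        (e * deriv (deriv g) (z₀ + (t : ℂ) * e)) t := hasDerivAt_line (deriv g) hdgdiff z₀ e t
    have h3' : HasDerivAt (fun t : ℝ => e * deriv g (z₀ + (t : ℂ) * e))
        (e * (e * deriv (deriv g) (z₀ + (t : ℂ) * e))) t := h2'.const_mul e
    have h4' := h1'.prodMk h3'
    rw [hF_def]
    convert h4' using 2
    rw [hddg]
    ring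
  have hF0 : F 0 = 0 := by
    rw [hF_def]
    simp [hg0, hdg0]
  have key : ∀ t ∈ Set.Icc (0:ℝ) 1, ‖F t‖ ≤ gronwallBound 0 K 0 (t - 0) := by
    apply norm_le_gronwallBound_of_norm_deriv_right_le
    · exact fun t _ => (hF t).continuousAt.continuousWithinAt
    · exact fun t _ => (hF t).hasDerivWithinAt
    · rw [hF0]; simp
    · intro t ht
      have htIcc : t ∈ Set.Icc (0:ℝ) 1 := ⟨ht.1, ht.2.le⟩
      have hFn : ‖F t‖ = max ‖g (z₀ + (t : ℂ) * e)‖ ‖e * deriv g (z₀ + (t : ℂ) * e)‖ := by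
        rw [hF_def]
        exact Prod.norm_def _
      have hK0' : (0:ℝ) ≤ K := le_trans zero_le_one hK1
      rw [Prod.norm_def]
      simp only
      rw [add_zero]
      apply max_le
      · calc ‖e * deriv g (z₀ + (t : ℂ) * e)‖ ≤ ‖F t‖ := by
              rw [hFn]; exact le_max_right _ _
          _ ≤ K * ‖F t‖ := le_mul_of_one_le_left (norm_nonneg _) hK1
      · calc ‖e ^ 2 * (Pol d α (z₀ + (t : ℂ) * e) - lam) * g (z₀ + (t : ℂ) * e)‖
            = ‖e ^ 2 * (Pol d α (z₀ + (t : ℂ) * e) - lam)‖ * ‖g (z₀ + (t : ℂ) * e)‖ :=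
              norm_mul _ _
          _ ≤ K * ‖g (z₀ + (t : ℂ) * e)‖ :=
              mul_le_mul_of_nonneg_right (le_trans (hC' t htIcc) hKC) (norm_nonneg _)
          _ ≤ K * ‖F t‖ := by
              apply mul_le_mul_of_nonneg_left _ hK0'
              rw [hFn]; exact le_max_left _ _
  have hF1 : ‖F 1‖ ≤ 0 := by
    have := key 1 ⟨zero_le_one, le_refl 1⟩
    rwa [gronwallBound_ε0, zero_mul] at this
  have hF1' : F 1 = 0 := norm_le_zero_iff.mp hF1
  have hgz : g (z₀ + (1 : ℂ) * e) = 0 := by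
    have := congrArg Prod.fst hF1'
    simpa [hF_def] using this
  have : z₀ + (1 : ℂ) * e = z := by rw [he_def]; ring
  rwa [this] at hgz

theorem stmt9 (d : ℕ) (hd : 2 ≤ d) (n : ℕ) (hn : n = d + 2)
    (α : Fin (d - 1) → ℂ) (lam : ℂ) (j : ℕ) (hj : j < n)
    (y₁ y₂ : ℂ → ℂ) (hy₁ : IsSol d α lam y₁) (hy₂ : IsSol d α lam y₂)
    (h₁0 : y₁ ≠ 0) (h₂0 : y₂ ≠ 0)
    (hs₁ : Subdominant n j y₁) (hs₂ : Subdominant n j y₂) :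
    ∃ c : ℂ, c ≠ 0 ∧ y₂ = fun z => c * y₁ z := by
  have hW0 := wronskian_vanish d hd n hn α lam j y₁ y₂ hy₁ hy₂ hs₁ hs₂
  obtain ⟨c, hc⟩ := colinear_of_wronskian_zero hy₁ hy₂ hW0 h₁0
  refine ⟨c, ?_, hc⟩
  rintro rfl
  exact h₂0 (hc.trans (by funext z; simp))
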